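/- For a Fell bundle ρ: B ↠ Γ, the 2-norm on sections, defined by ‖a‖₂ = sup over units x and finite F ⊆ Γx of √‖Σ_{γ∈F} a(γ)*a(γ)‖, dominates the supremum norm and is subadditive: ‖a+b‖₂ ≤ ‖a‖₂ + ‖b‖₂ (as [0,∞]-valued norms). -/

import Mathlib

open Filter Topology

/-- An étale groupoid: a groupoid (partial multiplication encoded via `Option`,
with inverse, source and range maps) carrying a topology making inversion and
multiplication continuous, with open source map and a basis of open slices. -/
structure EtaleGroupoid (Γ : Type*) [TopologicalSpace Γ] where
  mul : Γ → Γ → Option Γ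
  inv : Γ → Γ
  s : Γ → Γ
  r : Γ → Γ
  s_unit : ∀ γ, mul γ (s γ) = some γ
  r_unit : ∀ γ, mul (r γ) γ = some γ
  mul_isSome : ∀ a b, (mul a b).isSome ↔ s a = r b
  inv_mul : ∀ γ, mul (inv γ) γ = some (s γ)
  mul_inv : ∀ γ, mul γ (inv γ) = some (r γ)
  inv_inv : ∀ γ, inv (inv γ) = γ
  s_inv : ∀ γ, s (inv γ) = r γ
  r_inv : ∀ γ, r (inv γ) = s γ
  s_s : ∀ γ, s (s γ) = s γ
  r_s : ∀ γ, r (s γ) = s γ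
  inv_s : ∀ γ, inv (s γ) = s γ
  s_r : ∀ γ, s (r γ) = r γ
  r_r : ∀ γ, r (r γ) = r γ
  inv_r : ∀ γ, inv (r γ) = r γ
  mul_s_s : ∀ γ, mul (s γ) (s γ) = some (s γ)
  mul_r_r : ∀ γ, mul (r γ) (r γ) = some (r γ)
  s_eq_r : ∀ {a b c}, mul a b = some c → s a = r b
  s_mul : ∀ {a b c}, mul a b = some c → s c = s b
  r_mul : ∀ {a b c}, mul a b = some c → r c = r a
  inv_mul_inv : ∀ {a b c}, mul a b = some c → mul (inv b) (inv a) = some (inv c)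
  mul_assoc' : ∀ {a b c p q pc}, mul a b = some p → mul b c = some q →
    mul p c = some pc → mul a q = some pc
  continuous_inv : Continuous inv
  continuous_s : Continuous s
  continuous_r : Continuous r
  isOpenMap_s : IsOpenMap s
  continuous_mul : Continuous fun p : {p : Γ × Γ // (mul p.1 p.2).isSome} =>
    (mul p.1.1 p.1.2).get p.2
  etale : ∀ γ : Γ, ∃ O : Set Γ, IsOpen O ∧ γ ∈ O ∧ Set.InjOn s O ∧ Set.InjOn r O

open scoped ENNReal NNReal

variable {Γ : Type*} [TopologicalSpace Γ]

/-- The unit space `Γ⁰` of an étale groupoid. -/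
def EtaleGroupoid.units (G : EtaleGroupoid Γ) : Set Γ := Set.range G.s

/-- A slice: a subset on which both the source and range maps are injective. -/
def EtaleGroupoid.IsSlice (G : EtaleGroupoid Γ) (B : Set Γ) : Prop :=
  Set.InjOn G.s B ∧ Set.InjOn G.r B

/-- Transport along an equality of base points between fibres. -/
def castE {X : Type*} {E : X → Type*} {α β : X} (h : α = β) (a : E α) : E β := h ▸ a

/-- A Fell bundle over an étale groupoid `G` on `Γ`: a Banach bundle whose
total space `Σ γ, E γ` is a topological *-semigroupoid over `Γ` with bilinear
products, antilinear involution, submultiplicative norm, the C*-identity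
`‖b*b‖ = ‖b‖²`, and every `b*b` a square `a*a` of an element of the unit
fibre over `s(ρ(b))`. -/
structure FellBundle {Γ : Type*} [TopologicalSpace Γ] (G : EtaleGroupoid Γ)
    (E : Γ → Type*) [∀ γ, NormedAddCommGroup (E γ)] [∀ γ, NormedSpace ℂ (E γ)]
    [∀ γ, CompleteSpace (E γ)] [TopologicalSpace (Σ γ, E γ)] where
  mul : ∀ {α β γ : Γ}, G.mul α β = some γ → E α → E β → E γ
  star : ∀ {γ : Γ}, E γ → E (G.inv γ)
  mul_add : ∀ {α β γ} (h : G.mul α β = some γ) (a : E α) (b c : E β),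
      mul h a (b + c) = mul h a b + mul h a c
  add_mul : ∀ {α β γ} (h : G.mul α β = some γ) (a b : E α) (c : E β),
      mul h (a + b) c = mul h a c + mul h b c
  smul_mul : ∀ {α β γ} (h : G.mul α β = some γ) (z : ℂ) (a : E α) (b : E β),
      mul h (z • a) b = z • mul h a b
  mul_smul : ∀ {α β γ} (h : G.mul α β = some γ) (z : ℂ) (a : E α) (b : E β),
      mul h a (z • b) = z • mul h a b
  mul_assoc : ∀ {a b c p q pc} (h1 : G.mul a b = some p) (h2 : G.mul b c = some q)
      (h3 : G.mul p c = some pc) (x : E a) (y : E b) (z : E c),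
      mul h3 (mul h1 x y) z = mul (G.mul_assoc' h1 h2 h3) x (mul h2 y z)
  star_add : ∀ {γ} (a b : E γ), star (a + b) = star a + star b
  star_smul : ∀ {γ} (z : ℂ) (a : E γ), star (z • a) = (starRingEnd ℂ z) • star a
  star_star : ∀ {γ} (a : E γ), star (star a) = castE (G.inv_inv γ).symm a
  star_mul : ∀ {α β γ} (h : G.mul α β = some γ) (a : E α) (b : E β),
      star (mul h a b) = mul (G.inv_mul_inv h) (star b) (star a)
  norm_mul_le : ∀ {α β γ} (h : G.mul α β = some γ) (a : E α) (b : E β),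
      ‖mul h a b‖ ≤ ‖a‖ * ‖b‖
  norm_star : ∀ {γ} (a : E γ), ‖star a‖ = ‖a‖
  cstar : ∀ {γ} (b : E γ), ‖mul (G.inv_mul γ) (star b) b‖ = ‖b‖ ^ 2
  exists_sq : ∀ {γ} (b : E γ), ∃ a : E (G.s γ),
      mul (G.mul_s_s γ) (castE (G.inv_s γ) (star a)) a = mul (G.inv_mul γ) (star b) b
  continuous_proj : Continuous (Sigma.fst : (Σ γ, E γ) → Γ)
  isOpenMap_proj : IsOpenMap (Sigma.fst : (Σ γ, E γ) → Γ)
  continuous_smul : ∀ z : ℂ, Continuous (fun b : Σ γ, E γ => (⟨b.1, z • b.2⟩ : Σ γ, E γ))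
  continuous_add : Continuous (fun p : {p : (Σ γ, E γ) × (Σ γ, E γ) // p.1.1 = p.2.1} =>
      (⟨p.1.1.1, p.1.1.2 + castE p.2.symm p.1.2.2⟩ : Σ γ, E γ))
  usc_norm : UpperSemicontinuous (fun b : Σ γ, E γ => ‖b.2‖)
  zero_lim : ∀ (l : Filter (Σ γ, E γ)) (x : Γ), Tendsto Sigma.fst l (𝓝 x) →
      Tendsto (fun b : Σ γ, E γ => ‖b.2‖) l (𝓝 (0 : ℝ)) →
      l ≤ 𝓝 (⟨x, 0⟩ : Σ γ, E γ)
  continuous_mul' : Continuous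
      (fun p : {p : (Σ γ, E γ) × (Σ γ, E γ) // (G.mul p.1.1 p.2.1).isSome} =>
        (⟨(G.mul p.1.1.1 p.1.2.1).get p.2,
          mul (Option.some_get p.2).symm p.1.1.2 p.1.2.2⟩ : Σ γ, E γ))
  continuous_star' : Continuous (fun b : Σ γ, E γ => (⟨G.inv b.1, star b.2⟩ : Σ γ, E γ))

namespace FellBundle

variable {G : EtaleGroupoid Γ} {E : Γ → Type*}
  [∀ γ, NormedAddCommGroup (E γ)] [∀ γ, NormedSpace ℂ (E γ)]
  [∀ γ, CompleteSpace (E γ)] [TopologicalSpace (Σ γ, E γ)]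

/-- The convolution product of two sections: `ab(γ) = Σ_{γ=αβ} a(α)b(β)`
(a `tsum`, i.e. junk value `0` if the sum does not converge unconditionally). -/
noncomputable def conv (F : FellBundle G E) (a b : ∀ γ, E γ) (γ : Γ) : E γ :=
  ∑' p : {p : Γ × Γ // G.mul p.1 p.2 = some γ}, F.mul p.2 (a p.1.1) (b p.1.2)

/-- The convolution product `ab` is defined: at each `γ` the net of finite
partial sums of `a(α)b(β)` over `γ = αβ` converges in the fibre `E γ`. -/
def ConvDefined (F : FellBundle G E) (a b : ∀ γ, E γ) : Prop :=
  ∀ γ : Γ, Summable (fun p : {p : Γ × Γ // G.mul p.1 p.2 = some γ} =>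
    F.mul p.2 (a p.1.1) (b p.1.2))

/-- The involution of sections: `a*(γ) = a(γ⁻¹)*`. -/
noncomputable def starSec (F : FellBundle G E) (a : ∀ γ, E γ) (γ : Γ) : E γ :=
  castE (G.inv_inv γ) (F.star (a (G.inv γ)))

/-- The pointwise *-square `a(γ)*a(γ) ∈ E (s γ)`. -/
noncomputable def starSq (F : FellBundle G E) (a : ∀ γ, E γ) (γ : Γ) : E (G.s γ) :=
  F.mul (G.inv_mul γ) (F.star (a γ)) (a γ)

/-- The (possibly infinite) supremum norm `‖a‖_∞` of a section. -/
noncomputable def supNorm (_F : FellBundle G E) (a : ∀ γ, E γ) : ℝ≥0∞ :=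
  ⨆ γ : Γ, (‖a γ‖₊ : ℝ≥0∞)

/-- The (possibly infinite) 2-norm
`‖a‖₂ = sup_{x} sup_{F ⊂ Γx finite} √‖Σ_{γ∈F} a(γ)*a(γ)‖`. -/
noncomputable def twoNorm (F : FellBundle G E) (a : ∀ γ, E γ) : ℝ≥0∞ :=
  ⨆ x : Γ, ⨆ s : Finset {γ : Γ // G.s γ = x},
    ENNReal.ofReal (Real.sqrt ‖∑ γ ∈ s, castE γ.prop (F.starSq a γ.val)‖)

/-- The (possibly infinite) 1-norm `‖a‖₁ = sup_{x∈Γ⁰} Σ_{γ∈Γx} ‖a(γ)‖`. -/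
noncomputable def oneNorm (_F : FellBundle G E) (a : ∀ γ, E γ) : ℝ≥0∞ :=
  ⨆ x : Γ, ∑' γ : {γ : Γ // G.s γ = x}, (‖a γ.val‖₊ : ℝ≥0∞)

/-- The (possibly infinite) b-norm
`‖a‖_b = sup {‖af‖₂/‖f‖₂ : f finitely supported}` (with `0/0 = 0`). -/
noncomputable def bNorm (F : FellBundle G E) (a : ∀ γ, E γ) : ℝ≥0∞ :=
  ⨆ f : {f : ∀ γ, E γ // {γ | f γ ≠ 0}.Finite},
    F.twoNorm (F.conv a f.val) / F.twoNorm f.val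

/-- Positivity in the C*-algebra unit fibre `E (s γ)`: being of the form `c*c`. -/
def posAt (F : FellBundle G E) (γ : Γ) (p : E (G.s γ)) : Prop :=
  ∃ c : E (G.s γ), p = F.mul (G.mul_s_s γ) (castE (G.inv_s γ) (F.star c)) c

/-- Positivity in the C*-algebra unit fibre `E (r γ)`: being of the form `c*c`. -/
def posAtR (F : FellBundle G E) (γ : Γ) (p : E (G.r γ)) : Prop :=
  ∃ c : E (G.r γ), p = F.mul (G.mul_r_r γ) (castE (G.inv_r γ) (F.star c)) c

end FellBundle

open Classical in
/-- The 0-restriction `a_Δ` of a section: equal to `a` on `Δ` and `0` elsewhere. -/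
noncomputable def restrictSec {Γ : Type*} {E : Γ → Type*} [∀ γ, NormedAddCommGroup (E γ)]
    (Δ : Set Γ) (a : ∀ γ, E γ) (γ : Γ) : E γ :=
  if γ ∈ Δ then a γ else 0

variable {Γ : Type*} [TopologicalSpace Γ] {G : EtaleGroupoid Γ} {E : Γ → Type*}
  [∀ γ, NormedAddCommGroup (E γ)] [∀ γ, NormedSpace ℂ (E γ)]
  [∀ γ, CompleteSpace (E γ)] [TopologicalSpace (Σ γ, E γ)]


section AuxCast

variable {X : Type*} {E : X → Type*}

@[simp] lemma castE_rfl {α : X} (a : E α) : castE (rfl : α = α) a = a := rfl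

lemma castE_irrel {α : X} (h : α = α) (a : E α) : castE h a = a := rfl

lemma castE_castE {α β δ : X} (h1 : α = β) (h2 : β = δ) (a : E α) :
    castE h2 (castE h1 a) = castE (h1.trans h2) a := by subst h1; subst h2; rfl

end AuxCast

section AuxNorm

variable {X : Type*} {E : X → Type*} [∀ γ, NormedAddCommGroup (E γ)]

lemma norm_castE {α β : X} (h : α = β) (a : E α) : ‖castE (E := E) h a‖ = ‖a‖ := by
  subst h; rfl

lemma castE_add {α β : X} (h : α = β) (a b : E α) :
    castE (E := E) h (a + b) = castE h a + castE h b := by subst h; rfl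

lemma castE_smul [∀ γ, NormedSpace ℂ (E γ)] {α β : X} (h : α = β) (z : ℂ) (a : E α) :
    castE (E := E) h (z • a) = z • castE h a := by subst h; rfl

end AuxNorm

section AuxReal

open Real in
lemma real_key {n p q : ℝ} (hp : 0 ≤ p) (hq : 0 ≤ q)
    (h : ∀ t : ℝ, 0 < t → n ≤ (1 + t ^ 2) * p + (1 + t⁻¹ ^ 2) * q) :
    Real.sqrt n ≤ Real.sqrt p + Real.sqrt q := by
  have key : n ≤ (Real.sqrt p + Real.sqrt q) ^ 2 := by
    refine le_of_forall_pos_le_add fun δ hδ => ?_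
    set sp := Real.sqrt p with hsp
    set sq := Real.sqrt q with hsq
    have hsp0 : 0 ≤ sp := Real.sqrt_nonneg _
    have hsq0 : 0 ≤ sq := Real.sqrt_nonneg _
    have hps : sp ^ 2 = p := Real.sq_sqrt hp
    have hqs : sq ^ 2 = q := Real.sq_sqrt hq
    set ε : ℝ := min 1 (δ / (2 * (sp + sq) + 4)) with hεdef
    have hc : (0:ℝ) < 2 * (sp + sq) + 4 := by positivity
    have hε0 : 0 < ε := lt_min one_pos (by positivity)
    have hε1 : ε ≤ 1 := min_le_left _ _
    have hε2 : ε ≤ δ / (2 * (sp + sq) + 4) := min_le_right _ _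
    have hd : ε * (2 * (sp + sq) + 4) ≤ δ := by
      rw [← le_div_iff₀ hc]; exact hε2
    -- main estimate with this ε
    have hspε : 0 < sp + ε := by positivity
    have hsqε : 0 < sq + ε := by positivity
    have ht : 0 < Real.sqrt ((sq + ε) / (sp + ε)) := Real.sqrt_pos.mpr (by positivity)
    have h1 : (Real.sqrt ((sq + ε) / (sp + ε))) ^ 2 = (sq + ε) / (sp + ε) :=
      Real.sq_sqrt (by positivity)
    have h2 : (Real.sqrt ((sq + ε) / (sp + ε)))⁻¹ ^ 2 = (sp + ε) / (sq + ε) := by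
      rw [inv_pow, h1, inv_div]
    have hmain := h _ ht
    rw [h1, h2] at hmain
    have hp' : p ≤ (sp + ε) ^ 2 := by nlinarith [hps, hsp0, hε0.le]
    have hq' : q ≤ (sq + ε) ^ 2 := by nlinarith [hqs, hsq0, hε0.le]
    have e1 : (sq + ε) / (sp + ε) * p ≤ (sq + ε) * (sp + ε) := by
      rw [div_mul_eq_mul_div, div_le_iff₀ hspε]
      nlinarith [mul_le_mul_of_nonneg_left hp' hsqε.le]
    have e2 : (sp + ε) / (sq + ε) * q ≤ (sp + ε) * (sq + ε) := by
      rw [div_mul_eq_mul_div, div_le_iff₀ hsqε]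
      nlinarith [mul_le_mul_of_nonneg_left hq' hspε.le]
    have hee : ε * ε ≤ ε := mul_le_of_le_one_right hε0.le hε1
    have step1 : n ≤ p + q + 2 * ((sq + ε) * (sp + ε)) := by
      have hdist : (1 + (sq + ε) / (sp + ε)) * p + (1 + (sp + ε) / (sq + ε)) * q
          = p + q + ((sq + ε) / (sp + ε) * p + (sp + ε) / (sq + ε) * q) := by ring
      rw [hdist] at hmain
      linarith [e1, e2]
    have hexpand : p + q + 2 * ((sq + ε) * (sp + ε))
        = (sp + sq) ^ 2 + (2 * (ε * sp) + 2 * (ε * sq) + 2 * (ε * ε)) := by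
      rw [← hps, ← hqs]; ring
    have hd' : 2 * (ε * sp) + 2 * (ε * sq) + 4 * ε ≤ δ := by linarith [hd]
    rw [hexpand] at step1
    linarith [step1, hee, hd', hε0.le]
  calc Real.sqrt n ≤ Real.sqrt ((Real.sqrt p + Real.sqrt q) ^ 2) := Real.sqrt_le_sqrt key
    _ = Real.sqrt p + Real.sqrt q := Real.sqrt_sq (by positivity)

end AuxReal

section AuxCStar

open scoped ComplexConjugate

/-- Abstract C*-algebra Minkowski-type inequality. -/
lemma cstar_key {B : Type*} [CStarAlgebra B] (P Q C : B)
    (hsq : ∀ t u : ℝ, ((t : ℂ) ^ 2) • P + ((t : ℂ) * (u : ℂ)) • C + ((u : ℂ) ^ 2) • Q ∈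
      AddSubmonoid.closure (Set.range fun b : B => star b * b)) :
    Real.sqrt ‖P + C + Q‖ ≤ Real.sqrt ‖P‖ + Real.sqrt ‖Q‖ := by
  letI := CStarAlgebra.spectralOrder B
  haveI := CStarAlgebra.spectralOrderedRing B
  have hnn : ∀ t u : ℝ,
      (0 : B) ≤ ((t : ℂ) ^ 2) • P + ((t : ℂ) * (u : ℂ)) • C + ((u : ℂ) ^ 2) • Q := fun t u =>
    StarOrderedRing.nonneg_iff.mpr (hsq t u)
  have hX : (0 : B) ≤ P + C + Q := by simpa using hnn 1 1
  refine real_key (norm_nonneg _) (norm_nonneg _) fun t ht => ?_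
  have hY : P + C + Q ≤ (((1 + t ^ 2 : ℝ)) : ℂ) • P + (((1 + t⁻¹ ^ 2 : ℝ)) : ℂ) • Q := by
    rw [← sub_nonneg]
    have h2 := hnn t (-t⁻¹)
    have h3 : (t : ℂ) * ((-t⁻¹ : ℝ) : ℂ) = -1 := by
      push_cast
      rw [mul_neg, mul_inv_cancel₀ (Complex.ofReal_ne_zero.mpr ht.ne')]
    rw [h3] at h2
    convert h2 using 1
    push_cast
    module
  calc ‖P + C + Q‖ ≤ ‖(((1 + t ^ 2 : ℝ)) : ℂ) • P + (((1 + t⁻¹ ^ 2 : ℝ)) : ℂ) • Q‖ :=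
        CStarAlgebra.norm_le_norm_of_nonneg_of_le hX hY
    _ ≤ ‖(((1 + t ^ 2 : ℝ)) : ℂ) • P‖ + ‖(((1 + t⁻¹ ^ 2 : ℝ)) : ℂ) • Q‖ := norm_add_le _ _
    _ = (1 + t ^ 2) * ‖P‖ + (1 + t⁻¹ ^ 2) * ‖Q‖ := by
        rw [norm_smul, norm_smul, Complex.norm_real, Complex.norm_real,
          Real.norm_of_nonneg (by positivity), Real.norm_of_nonneg (by positivity)]

end AuxCStar

section UnitFiber

variable {Γ : Type*} [TopologicalSpace Γ] {G : EtaleGroupoid Γ} {E : Γ → Type*}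
  [∀ γ, NormedAddCommGroup (E γ)] [∀ γ, NormedSpace ℂ (E γ)]
  [∀ γ, CompleteSpace (E γ)] [TopologicalSpace (Σ γ, E γ)]

lemma unit_inv_eq {x : Γ} (hx : G.s x = x) : G.inv x = x := by
  have := G.inv_s x; rwa [hx] at this

lemma unit_mul_eq {x : Γ} (hx : G.s x = x) : G.mul x x = some x := by
  have := G.mul_s_s x; rwa [hx] at this

lemma castE_star (F : FellBundle G E) {α β : Γ} (h : α = β) (a : E α) :
    F.star (castE h a) = castE (congrArg G.inv h) (F.star a) := by subst h; rfl

lemma castE_mul (F : FellBundle G E) {α α' β β' δ δ' : Γ} (h1 : α = α') (h2 : β = β')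
    (h3 : δ = δ') (hm : G.mul α β = some δ) (hm' : G.mul α' β' = some δ')
    (a : E α) (b : E β) :
    castE h3 (F.mul hm a b) = F.mul hm' (castE h1 a) (castE h2 b) := by
  subst h1; subst h2; subst h3; rfl

/-- The fibre over a unit, as a type synonym carrying a C*-algebra structure. -/
def UnitFiber (F : FellBundle G E) (x : Γ) (hx : G.s x = x) : Type _ := E x

namespace UnitFiber

variable (F : FellBundle G E) (x : Γ) (hx : G.s x = x)

noncomputable instance : NormedAddCommGroup (UnitFiber F x hx) :=
  inferInstanceAs (NormedAddCommGroup (E x))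

noncomputable instance : NormedSpace ℂ (UnitFiber F x hx) :=
  inferInstanceAs (NormedSpace ℂ (E x))

instance : CompleteSpace (UnitFiber F x hx) := inferInstanceAs (CompleteSpace (E x))

noncomputable instance : Mul (UnitFiber F x hx) := ⟨fun a b => F.mul (unit_mul_eq hx) a b⟩

noncomputable instance : Star (UnitFiber F x hx) :=
  ⟨fun a => castE (unit_inv_eq hx) (F.star (a : E x))⟩

lemma mul_def (a b : UnitFiber F x hx) : a * b = F.mul (unit_mul_eq hx) a b := rfl

lemma star_def (a : UnitFiber F x hx) :
    star a = castE (unit_inv_eq hx) (F.star (a : E x)) := rfl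

noncomputable instance : NonUnitalRing (UnitFiber F x hx) :=
  { (inferInstance : AddCommGroup (UnitFiber F x hx)) with
    mul := (· * ·)
    left_distrib := fun a b c => F.mul_add _ a b c
    right_distrib := fun a b c => F.add_mul _ a b c
    zero_mul := fun a => by
      have h := F.add_mul (unit_mul_eq hx) (0 : E x) 0 a
      rw [add_zero] at h
      exact (left_eq_add.mp h)
    mul_zero := fun a => by
      have h := F.mul_add (unit_mul_eq hx) a (0 : E x) 0
      rw [add_zero] at h
      exact (left_eq_add.mp h)
    mul_assoc := fun a b c =>
      F.mul_assoc (unit_mul_eq hx) (unit_mul_eq hx) (unit_mul_eq hx) a b c }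

noncomputable instance : NonUnitalNormedRing (UnitFiber F x hx) :=
  { (inferInstance : NormedAddCommGroup (UnitFiber F x hx)),
    (inferInstance : NonUnitalRing (UnitFiber F x hx)) with
    dist_eq := fun a b => dist_eq_norm_neg_add a b
    norm_mul_le := fun a b => F.norm_mul_le _ a b }

noncomputable instance : StarRing (UnitFiber F x hx) where
  star := star
  star_involutive := fun (a : E x) => by
    show castE (unit_inv_eq hx) (F.star (castE (unit_inv_eq hx) (F.star (a : E x)))) = a
    rw [castE_star, castE_castE, F.star_star, castE_castE, castE_irrel]
  star_mul := fun (a b : E x) => by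
    show castE (unit_inv_eq hx) (F.star (F.mul (unit_mul_eq hx) (a : E x) b)) = _
    rw [F.star_mul]
    exact castE_mul F (unit_inv_eq hx) (unit_inv_eq hx) (unit_inv_eq hx) _ _ _ _
  star_add := fun (a b : E x) => by
    show castE (unit_inv_eq hx) (F.star ((a : E x) + b)) = _
    rw [F.star_add, castE_add]
    rfl

noncomputable instance : CStarRing (UnitFiber F x hx) where
  norm_mul_self_le := fun b => by
    have h2 : (star b * b : UnitFiber F x hx)
        = castE hx (F.mul (G.inv_mul x) (F.star (b : E x)) b) :=
      (castE_mul F (unit_inv_eq hx) rfl hx (G.inv_mul x) (unit_mul_eq hx) _ _).symm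
    have h3 : ‖(star b * b : UnitFiber F x hx)‖ = ‖b‖ ^ 2 := by
      erw [h2, norm_castE, F.cstar]
      rfl
    rw [h3, sq]

instance : IsScalarTower ℂ (UnitFiber F x hx) (UnitFiber F x hx) :=
  ⟨fun z a b => F.smul_mul (unit_mul_eq hx) z a b⟩

instance : SMulCommClass ℂ (UnitFiber F x hx) (UnitFiber F x hx) :=
  ⟨fun z a b => (F.mul_smul (unit_mul_eq hx) z a b).symm⟩

instance : StarModule ℂ (UnitFiber F x hx) :=
  ⟨fun (z : ℂ) (a : E x) => by
    show castE (unit_inv_eq hx) (F.star (z • (a : E x))) = _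
    rw [F.star_smul, castE_smul]
    rfl⟩

noncomputable instance : NonUnitalCStarAlgebra (UnitFiber F x hx) where

end UnitFiber

open scoped ComplexConjugate

/-- The sesquilinear "Gram" form associated to a finite subset of a source fibre. -/
noncomputable def qform (F : FellBundle G E) {x : Γ} (hx : G.s x = x)
    (s : Finset {γ : Γ // G.s γ = x}) (f g : ∀ γ, E γ) : UnitFiber F x hx :=
  ∑ γ ∈ s, (castE γ.prop (F.mul (G.inv_mul γ.val) (F.star (f γ.val)) (g γ.val)) :
    UnitFiber F x hx)

lemma qform_expand (F : FellBundle G E) {x : Γ} (hx : G.s x = x)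
    (s : Finset {γ : Γ // G.s γ = x}) (f g : ∀ γ, E γ) :
    qform F hx s (fun γ => f γ + g γ) (fun γ => f γ + g γ)
      = qform F hx s f f + (qform F hx s f g + qform F hx s g f) + qform F hx s g g := by
  unfold qform
  erw [← Finset.sum_add_distrib, ← Finset.sum_add_distrib, ← Finset.sum_add_distrib]
  refine Finset.sum_congr rfl fun γ _ => ?_
  show (castE γ.prop _ : UnitFiber F x hx) = _
  rw [F.star_add, F.add_mul, F.mul_add, F.mul_add, castE_add, castE_add, castE_add]
  abel

lemma qform_smul (F : FellBundle G E) {x : Γ} (hx : G.s x = x)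
    (s : Finset {γ : Γ // G.s γ = x}) (z w : ℂ) (f g : ∀ γ, E γ) :
    qform F hx s (fun γ => z • f γ) (fun γ => w • g γ)
      = (conj z * w) • qform F hx s f g := by
  unfold qform
  erw [Finset.smul_sum]
  refine Finset.sum_congr rfl fun γ _ => ?_
  show (castE γ.prop _ : UnitFiber F x hx) = _
  rw [F.star_smul, F.smul_mul, F.mul_smul, smul_smul, castE_smul]
  rfl

lemma term_pos (F : FellBundle G E) {x γ : Γ} (hγ : G.s γ = x) (hx : G.s x = x) (bb : E γ) :
    ∃ c : UnitFiber F x hx,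
      (castE hγ (F.mul (G.inv_mul γ) (F.star bb) bb) : UnitFiber F x hx) = star c * c := by
  subst hγ
  obtain ⟨c, hc⟩ := F.exists_sq bb
  exact ⟨c, by rw [castE_rfl, ← hc]; rfl⟩

lemma qform_mem_closure (F : FellBundle G E) {x : Γ} (hx : G.s x = x)
    (s : Finset {γ : Γ // G.s γ = x}) (f : ∀ γ, E γ) :
    ((qform F hx s f f : UnitFiber F x hx) : Unitization ℂ (UnitFiber F x hx)) ∈
      AddSubmonoid.closure
        (Set.range fun b : Unitization ℂ (UnitFiber F x hx) => star b * b) := by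
  have hcoe : ((qform F hx s f f : UnitFiber F x hx) : Unitization ℂ (UnitFiber F x hx))
      = ∑ γ ∈ s, (Unitization.inr (R := ℂ) (A := UnitFiber F x hx)
          (castE γ.prop (F.mul (G.inv_mul γ.val) (F.star (f γ.val)) (f γ.val)) :
          UnitFiber F x hx)) := by
    rw [qform]
    exact map_sum (Unitization.inrNonUnitalStarAlgHom ℂ (UnitFiber F x hx)) _ s
  rw [hcoe]
  refine AddSubmonoid.sum_mem _ fun γ _ => ?_
  obtain ⟨c, hc⟩ := term_pos F γ.prop hx (f γ.val)
  rw [hc, Unitization.inr_mul, Unitization.inr_star]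
  exact AddSubmonoid.subset_closure ⟨_, rfl⟩

/-- The key bound: the 2-norm summand for `a + b` is controlled by those for `a` and `b`. -/
lemma main_bound (F : FellBundle G E) (a b : ∀ γ, E γ) (x : Γ) (hx : G.s x = x)
    (s : Finset {γ : Γ // G.s γ = x}) :
    Real.sqrt ‖∑ γ ∈ s, castE γ.prop (F.starSq (fun γ => a γ + b γ) γ.val)‖ ≤
      Real.sqrt ‖∑ γ ∈ s, castE γ.prop (F.starSq a γ.val)‖ +
      Real.sqrt ‖∑ γ ∈ s, castE γ.prop (F.starSq b γ.val)‖ := by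
  classical
  set P : UnitFiber F x hx := qform F hx s a a with hPdef
  set Q : UnitFiber F x hx := qform F hx s b b with hQdef
  set C : UnitFiber F x hx := qform F hx s a b + qform F hx s b a with hCdef
  have hqmem : ∀ t u : ℝ,
      ((t : ℂ) ^ 2) • ((P : Unitization ℂ (UnitFiber F x hx)))
        + ((t : ℂ) * (u : ℂ)) • ((C : Unitization ℂ (UnitFiber F x hx)))
        + ((u : ℂ) ^ 2) • ((Q : Unitization ℂ (UnitFiber F x hx))) ∈
      AddSubmonoid.closure
        (Set.range fun b : Unitization ℂ (UnitFiber F x hx) => star b * b) := by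
    intro t u
    have key := qform_mem_closure F hx s (fun γ => (t : ℂ) • a γ + (u : ℂ) • b γ)
    have e : qform F hx s (fun γ => (t : ℂ) • a γ + (u : ℂ) • b γ)
          (fun γ => (t : ℂ) • a γ + (u : ℂ) • b γ)
        = ((starRingEnd ℂ (t : ℂ)) * (t : ℂ)) • qform F hx s a a
          + (((starRingEnd ℂ (t : ℂ)) * (u : ℂ)) • qform F hx s a b
            + ((starRingEnd ℂ (u : ℂ)) * (t : ℂ)) • qform F hx s b a)
          + ((starRingEnd ℂ (u : ℂ)) * (u : ℂ)) • qform F hx s b b := by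
      rw [qform_expand F hx s (fun γ => (t : ℂ) • a γ) (fun γ => (u : ℂ) • b γ),
        qform_smul, qform_smul, qform_smul, qform_smul]
    rw [e] at key
    simp only [Complex.conj_ofReal, Unitization.inr_add, Unitization.inr_smul] at key
    convert key using 1
    rw [← hPdef, ← hQdef, hCdef]
    simp only [Unitization.inr_add]
    module
  have hfinal := cstar_key (B := Unitization ℂ (UnitFiber F x hx)) (↑P) (↑Q) (↑C) hqmem
  have hsum : ((P : Unitization ℂ (UnitFiber F x hx)) + ↑C + ↑Q)
      = ((P + C + Q : UnitFiber F x hx) : Unitization ℂ (UnitFiber F x hx)) := by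
    simp only [Unitization.inr_add]
  rw [hsum, Unitization.norm_inr, Unitization.norm_inr, Unitization.norm_inr] at hfinal
  have hexp : qform F hx s (fun γ => a γ + b γ) (fun γ => a γ + b γ) = P + C + Q := by
    rw [qform_expand F hx s a b, hPdef, hQdef, hCdef]
  show Real.sqrt ‖(qform F hx s (fun γ => a γ + b γ) (fun γ => a γ + b γ) :
        UnitFiber F x hx)‖ ≤
      Real.sqrt ‖(qform F hx s a a : UnitFiber F x hx)‖ +
      Real.sqrt ‖(qform F hx s b b : UnitFiber F x hx)‖
  rw [hexp, ← hPdef, ← hQdef]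
  exact hfinal

end UnitFiber

set_option maxHeartbeats 1000000 in
/-- The 2-norm dominates the supremum norm and is subadditive. -/
theorem stmt12 (F : FellBundle G E) (a b : ∀ γ, E γ) :
    F.supNorm a ≤ F.twoNorm a ∧
    F.twoNorm (fun γ => a γ + b γ) ≤ F.twoNorm a + F.twoNorm b := by
  constructor
  · show (⨆ γ : Γ, (‖a γ‖₊ : ℝ≥0∞)) ≤ F.twoNorm a
    refine iSup_le fun γ => ?_
    have hsum : (∑ δ ∈ ({⟨γ, rfl⟩} : Finset {δ : Γ // G.s δ = G.s γ}),
        castE δ.prop (F.starSq a δ.val)) = F.starSq a γ := by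
      rw [Finset.sum_singleton]
      rfl
    have key : (‖a γ‖₊ : ℝ≥0∞) = ENNReal.ofReal (Real.sqrt
        ‖∑ δ ∈ ({⟨γ, rfl⟩} : Finset {δ : Γ // G.s δ = G.s γ}),
          castE δ.prop (F.starSq a δ.val)‖) := by
      rw [hsum]
      rw [show ‖F.starSq a γ‖ = ‖a γ‖ ^ 2 from F.cstar (a γ)]
      rw [Real.sqrt_sq (norm_nonneg _)]
      rw [ofReal_norm_eq_enorm]; rfl
    rw [key]
    unfold FellBundle.twoNorm
    have h1 := le_iSup (fun t : Finset {δ : Γ // G.s δ = G.s γ} =>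
      ENNReal.ofReal (Real.sqrt ‖∑ δ ∈ t, castE δ.prop (F.starSq a δ.val)‖)) ({⟨γ, rfl⟩})
    have h2 := le_iSup (fun x : Γ => ⨆ t : Finset {δ : Γ // G.s δ = x},
      ENNReal.ofReal (Real.sqrt ‖∑ δ ∈ t, castE δ.prop (F.starSq a δ.val)‖)) (G.s γ)
    exact h1.trans h2
  · unfold FellBundle.twoNorm
    refine iSup₂_le fun x s => ?_
    rcases Finset.eq_empty_or_nonempty s with rfl | ⟨γ₀, _⟩
    · simp
    · have hx : G.s x = x := by rw [← γ₀.prop]; exact G.s_s _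
      have main := main_bound F a b x hx s
      have ha : ENNReal.ofReal (Real.sqrt ‖∑ γ ∈ s, castE γ.prop (F.starSq a γ.val)‖)
          ≤ ⨆ x : Γ, ⨆ s : Finset {γ : Γ // G.s γ = x},
            ENNReal.ofReal (Real.sqrt ‖∑ γ ∈ s, castE γ.prop (F.starSq a γ.val)‖) := by
        have h1 := le_iSup (fun t : Finset {γ : Γ // G.s γ = x} =>
          ENNReal.ofReal (Real.sqrt ‖∑ γ ∈ t, castE γ.prop (F.starSq a γ.val)‖)) s
        have h2 := le_iSup (fun y : Γ => ⨆ t : Finset {γ : Γ // G.s γ = y},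
          ENNReal.ofReal (Real.sqrt ‖∑ γ ∈ t, castE γ.prop (F.starSq a γ.val)‖)) x
        exact h1.trans h2
      have hb : ENNReal.ofReal (Real.sqrt ‖∑ γ ∈ s, castE γ.prop (F.starSq b γ.val)‖)
          ≤ ⨆ x : Γ, ⨆ s : Finset {γ : Γ // G.s γ = x},
            ENNReal.ofReal (Real.sqrt ‖∑ γ ∈ s, castE γ.prop (F.starSq b γ.val)‖) := by
        have h1 := le_iSup (fun t : Finset {γ : Γ // G.s γ = x} =>
          ENNReal.ofReal (Real.sqrt ‖∑ γ ∈ t, castE γ.prop (F.starSq b γ.val)‖)) s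
        have h2 := le_iSup (fun y : Γ => ⨆ t : Finset {γ : Γ // G.s γ = y},
          ENNReal.ofReal (Real.sqrt ‖∑ γ ∈ t, castE γ.prop (F.starSq b γ.val)‖)) x
        exact h1.trans h2
      calc ENNReal.ofReal (Real.sqrt
            ‖∑ γ ∈ s, castE γ.prop (F.starSq (fun γ => a γ + b γ) γ.val)‖)
          ≤ ENNReal.ofReal (Real.sqrt ‖∑ γ ∈ s, castE γ.prop (F.starSq a γ.val)‖
            + Real.sqrt ‖∑ γ ∈ s, castE γ.prop (F.starSq b γ.val)‖) :=
            ENNReal.ofReal_le_ofReal main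
        _ = ENNReal.ofReal (Real.sqrt ‖∑ γ ∈ s, castE γ.prop (F.starSq a γ.val)‖)
            + ENNReal.ofReal (Real.sqrt ‖∑ γ ∈ s, castE γ.prop (F.starSq b γ.val)‖) :=
            ENNReal.ofReal_add (Real.sqrt_nonneg _) (Real.sqrt_nonneg _)
        _ ≤ _ := add_le_add ha hb
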